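/- A hypothesis MDP derived from a closed and consistent exact observation table is consistent with the table: for every s ∈ S ∪ Lt(S) and e ∈ E, T(s·e) = H(s·e), where H is the hypothesis semantics. -/

import Mathlib

open scoped ENNReal Classical
open MeasureTheory

/-- Traces: alternating output-input sequences starting and ending with an output. -/
abbrev Trace (I O : Type*) := O × List (I × O)
/-- Test sequences: alternating output-input sequences starting with an output, ending with an input. -/
abbrev TS (I O : Type*) := List (O × I)
/-- Continuation sequences: start and end with an input. -/
abbrev CS (I O : Type*) := I × List (O × I)

/-- Deterministic labelled Markov decision process. -/
structure DetMDP (Q I O : Type*) where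
  q0 : Q
  trans : Q → I → Q → ℝ≥0∞
  lab : Q → O
  sum_one : ∀ q i, ∑' q', trans q i q' = 1
  det : ∀ q i q' q'', 0 < trans q i q' → 0 < trans q i q'' → lab q' = lab q'' → q' = q''

namespace DetMDP

variable {Q I O : Type*}

/-- Δ: unique successor with positive probability and matching label, if any. -/
noncomputable def step (M : DetMDP Q I O) (q : Q) (i : I) (o : O) : Option Q :=
  if h : ∃ q', 0 < M.trans q i q' ∧ M.lab q' = o then some h.choose else none

noncomputable def run (M : DetMDP Q I O) : Option Q → List (I × O) → Option Q
  | oq, [] => oq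
  | some q, (i, o) :: rest => M.run (M.step q i o) rest
  | none, _ :: _ => none

/-- δ*: the state reached by a trace, `none` if the trace is not observable. -/
noncomputable def dstar (M : DetMDP Q I O) (t : Trace I O) : Option Q :=
  if M.lab M.q0 = t.1 then M.run (some M.q0) t.2 else none

/-- Distribution over outputs after executing input `i` in state `q`. -/
noncomputable def outDist (M : DetMDP Q I O) (q : Q) (i : I) : O → ℝ≥0∞ :=
  fun o => ∑' q', if M.lab q' = o then M.trans q i q' else 0

end DetMDP

/-- Split a nonempty test sequence into its trace part and final input. -/
def tsSplit {I O : Type*} : O → I → TS I O → Trace I O × I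
  | o, i, [] => ((o, []), i)
  | o, i, (o', i') :: rest =>
    let p := tsSplit o' i' rest
    ((o, (i, p.1.1) :: p.1.2), p.2)

namespace DetMDP

variable {Q I O : Type*}

/-- The semantics of a deterministic labelled MDP: a partial map from test
sequences to output distributions. -/
noncomputable def sem (M : DetMDP Q I O) : TS I O → Option (O → ℝ≥0∞)
  | [] => some (fun o => if M.lab M.q0 = o then 1 else 0)
  | (o, i) :: rest =>
    let p := tsSplit o i rest
    match M.dstar p.1 with
    | none => none
    | some q => some (M.outDist q p.2)

/-- Probability of observing the output part of a trace suffix from a state. -/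
noncomputable def traceProb (M : DetMDP Q I O) : Option Q → List (I × O) → ℝ≥0∞
  | none, _ => 0
  | some _, [] => 1
  | some q, (i, o) :: rest => M.outDist q i o * M.traceProb (M.step q i o) rest

end DetMDP

def traceInputAux {I O : Type*} : O → List (I × O) → I → TS I O
  | o, [], i => [(o, i)]
  | o, (i', o') :: rest, i => (o, i') :: traceInputAux o' rest i

/-- The test sequence `t · i`. -/
def traceInput {I O : Type*} (t : Trace I O) (i : I) : TS I O := traceInputAux t.1 t.2 i

/-- The test sequence `t · e` for a continuation sequence `e`. -/
def traceCS {I O : Type*} (t : Trace I O) (e : CS I O) : TS I O := traceInput t e.1 ++ e.2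

/-- The trace `t · i · o`. -/
def extT {I O : Type*} (t : Trace I O) (i : I) (o : O) : Trace I O := (t.1, t.2 ++ [(i, o)])

/-- The last output of a trace. -/
def lastOut {I O : Type*} (t : Trace I O) : O := ((t.2.getLast?).map Prod.snd).getD t.1

/-- Trace prefix relation. -/
def tracePrefix {I O : Type*} (t t' : Trace I O) : Prop := t.1 = t'.1 ∧ t.2 <+: t'.2

/-- `f(s)(o)` read off a partial semantics function (0 when undefined). -/
def probOf {I O : Type*} (f : TS I O → Option (O → ℝ≥0∞)) (s : TS I O) (o : O) : ℝ≥0∞ :=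
  ((f s).getD fun _ => 0) o

/-- M-equivalence of traces. -/
def MEq {I O : Type*} (f : TS I O → Option (O → ℝ≥0∞)) (t1 t2 : Trace I O) : Prop :=
  lastOut t1 = lastOut t2 ∧ ∀ e : CS I O, f (traceCS t1 e) = f (traceCS t2 e)

/-- Row of a trace in an observation table with column labels `E`. -/
noncomputable def rowOn {I O : Type*} (E : Set (CS I O)) (f : TS I O → Option (O → ℝ≥0∞)) (t : Trace I O) :
    CS I O → Option (O → ℝ≥0∞) :=
  fun e => if e ∈ E then f (traceCS t e) else none

/-- Row equivalence `eqRow_E`. -/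
def eqRow {I O : Type*} (E : Set (CS I O)) (f : TS I O → Option (O → ℝ≥0∞))
    (t1 t2 : Trace I O) : Prop :=
  lastOut t1 = lastOut t2 ∧ rowOn E f t1 = rowOn E f t2

/-- Membership in `Lt(S)`: observable one-step extensions of short traces. -/
def inLt {I O : Type*} (f : TS I O → Option (O → ℝ≥0∞)) (S : Set (Trace I O))
    (t : Trace I O) : Prop :=
  ∃ s ∈ S, ∃ i o, t = extT s i o ∧ 0 < probOf f (traceInput s i) o

/-- Closedness of an observation table. -/
def ClosedTable {I O : Type*} (E : Set (CS I O)) (f : TS I O → Option (O → ℝ≥0∞))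
    (S : Set (Trace I O)) : Prop :=
  ∀ l, inLt f S l → ∃ s ∈ S, eqRow E f l s

/-- Consistency of an observation table. -/
def ConsistentTable {I O : Type*} (E : Set (CS I O)) (f : TS I O → Option (O → ℝ≥0∞))
    (S : Set (Trace I O)) : Prop :=
  ∀ s1 ∈ S, ∀ s2 ∈ S, eqRow E f s1 s2 → ∀ i o,
    (probOf f (traceInput s1 i) o = 0 ∧ probOf f (traceInput s2 i) o = 0) ∨
      eqRow E f (extT s1 i o) (extT s2 i o)

/-- The hypothesis state `⟨last(s), row(s)⟩` associated with a trace. -/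
noncomputable def stateOf {I O : Type*} (E : Set (CS I O)) (f : TS I O → Option (O → ℝ≥0∞))
    (t : Trace I O) : O × (CS I O → Option (O → ℝ≥0∞)) :=
  (lastOut t, rowOn E f t)

section Aux

variable {Q I O : Type*}

lemma run_none (N : DetMDP Q I O) (l : List (I × O)) : N.run none l = none := by
  cases l <;> rfl

lemma run_append (N : DetMDP Q I O) (l1 l2 : List (I × O)) (oq : Option Q) :
    N.run oq (l1 ++ l2) = N.run (N.run oq l1) l2 := by
  induction l1 generalizing oq with
  | nil => cases oq <;> rfl
  | cons p l ih =>
    obtain ⟨i, o⟩ := p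
    cases oq with
    | none => simp [DetMDP.run, run_none]
    | some q => simpa [DetMDP.run] using ih _

lemma dstar_ext (N : DetMDP Q I O) (t : Trace I O) (j : I) (o : O) :
    N.dstar (extT t j o) = match N.dstar t with
      | none => none
      | some q => N.step q j o := by
  obtain ⟨o0, l⟩ := t
  simp only [DetMDP.dstar, extT]
  by_cases h : N.lab N.q0 = o0
  · refine (if_pos h).trans ?_
    rw [if_pos h, run_append]
    cases hr : N.run (some N.q0) l with
    | none => simp [run_none]
    | some q => simp [DetMDP.run]
  · refine (if_neg h).trans ?_
    rw [if_neg h]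

lemma dstar_ext_some (N : DetMDP Q I O) (t : Trace I O) (j : I) (o : O) (q : Q)
    (h : N.dstar t = some q) : N.dstar (extT t j o) = N.step q j o := by
  rw [dstar_ext, h]

lemma dstar_ext_none (N : DetMDP Q I O) (t : Trace I O) (j : I) (o : O)
    (h : N.dstar t = none) : N.dstar (extT t j o) = none := by
  rw [dstar_ext, h]

lemma tsSplit_TIA (l : List (I × O)) (o : O) (j : I) :
    ∃ p rest, traceInputAux o l j = p :: rest ∧ tsSplit p.1 p.2 rest = ((o, l), j) := by
  induction l generalizing o with
  | nil => exact ⟨(o, j), [], rfl, rfl⟩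
  | cons x l ih =>
    obtain ⟨i', o'⟩ := x
    obtain ⟨p, rest, h1, h2⟩ := ih o'
    refine ⟨(o, i'), traceInputAux o' l j, rfl, ?_⟩
    rw [h1]
    obtain ⟨p1, p2⟩ := p
    simp [tsSplit, h2]

lemma sem_traceInput (N : DetMDP Q I O) (t : Trace I O) (j : I) :
    N.sem (traceInput t j) = match N.dstar t with
      | none => none
      | some q => some (N.outDist q j) := by
  obtain ⟨o, l⟩ := t
  obtain ⟨p, rest, h1, h2⟩ := tsSplit_TIA l o j
  show N.sem (traceInputAux o l j) = _
  rw [h1]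
  obtain ⟨p1, p2⟩ := p
  simp only [DetMDP.sem, h2]

lemma TIA_append (l : List (I × O)) (o : O) (j : I) (o' : O) (j' : I) :
    traceInputAux o (l ++ [(j, o')]) j' = traceInputAux o l j ++ [(o', j')] := by
  induction l generalizing o with
  | nil => rfl
  | cons x l ih =>
    obtain ⟨a, b⟩ := x
    simp [traceInputAux, ih]

lemma traceCS_cons (t : Trace I O) (j : I) (o : O) (j' : I) (l : List (O × I)) :
    traceCS t (j, (o, j') :: l) = traceCS (extT t j o) (j', l) := by
  obtain ⟨o0, l0⟩ := t
  show traceInputAux o0 l0 j ++ ((o, j') :: l) =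
    traceInputAux o0 (l0 ++ [(j, o)]) j' ++ l
  rw [TIA_append]
  simp

lemma sem_traceCS_congr (N : DetMDP Q I O) (t1 t2 : Trace I O)
    (h : N.dstar t1 = N.dstar t2) (l : List (O × I)) (j : I) :
    N.sem (traceCS t1 (j, l)) = N.sem (traceCS t2 (j, l)) := by
  induction l generalizing t1 t2 j with
  | nil =>
    show N.sem (traceInput t1 j ++ []) = N.sem (traceInput t2 j ++ [])
    rw [List.append_nil, List.append_nil, sem_traceInput, sem_traceInput, h]
  | cons x l ih =>
    obtain ⟨o, j'⟩ := x
    rw [traceCS_cons, traceCS_cons]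
    exact ih _ _ (by rw [dstar_ext, dstar_ext, h]) _

lemma sem_traceCS_none (N : DetMDP Q I O) (t : Trace I O)
    (h : N.dstar t = none) (l : List (O × I)) (j : I) :
    N.sem (traceCS t (j, l)) = none := by
  induction l generalizing t j with
  | nil =>
    show N.sem (traceInput t j ++ []) = none
    rw [List.append_nil, sem_traceInput, h]
  | cons x l ih =>
    obtain ⟨o, j'⟩ := x
    rw [traceCS_cons]
    exact ih _ (by rw [dstar_ext, h]) _

lemma lastOut_extT (t : Trace I O) (j : I) (o : O) : lastOut (extT t j o) = o := by
  simp [lastOut, extT]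

lemma step_none (N : DetMDP Q I O) (q : Q) (j : I) (o : O)
    (h : N.outDist q j o = 0) : N.step q j o = none := by
  rw [DetMDP.step, dif_neg]
  rintro ⟨q', hq1, hq2⟩
  simp only [DetMDP.outDist] at h
  have h2 := ENNReal.tsum_eq_zero.mp h q'
  rw [if_pos hq2] at h2
  exact absurd h2 hq1.ne'

lemma outDist_pos_of_step (N : DetMDP Q I O) (q : Q) (j : I) (o : O) (q' : Q)
    (h : N.step q j o = some q') : 0 < N.outDist q j o := by
  rw [DetMDP.step] at h
  split at h
  case isTrue hex =>
    obtain ⟨q'', h1, h2⟩ := hex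
    calc (0 : ℝ≥0∞) < N.trans q j q'' := h1
      _ ≤ N.outDist q j o := by
        have := ENNReal.le_tsum (f := fun r => if N.lab r = o then N.trans q j r else 0) q''
        simpa [DetMDP.outDist, h2] using this
  case isFalse => exact absurd h (by simp)

end Aux

/-- A hypothesis MDP derived from a closed and consistent exact
observation table is consistent with the table: for every `s ∈ S ∪ Lt(S)` and
`e ∈ E`, `T(s·e) = H(s·e)`. -/
theorem hypothesis_consistent_with_table {Q I O : Type*} (M : DetMDP Q I O)
    (S : Set (Trace I O)) (E : Set (CS I O))
    (H : DetMDP (O × (CS I O → Option (O → ℝ≥0∞))) I O)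
    (hSpc : ∀ t ∈ S, ∀ t', tracePrefix t' t → t' ∈ S)
    (hS0 : ((M.lab M.q0, []) : Trace I O) ∈ S)
    (hE : ∀ i : I, ((i, []) : CS I O) ∈ E)
    (hEsc : ∀ (i : I) (ts : List (O × I)), ((i, ts) : CS I O) ∈ E →
      ∀ (o' : O) (i' : I) (l2 : List (O × I)), ((o', i') :: l2) <:+ ts → ((i', l2) : CS I O) ∈ E)
    (hrows : ∀ s ∈ S, ∀ i : I, M.sem (traceInput s i) ≠ none)
    (hclosed : ClosedTable E M.sem S)
    (hconsistent : ConsistentTable E M.sem S)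
    (hq0 : H.q0 = stateOf E M.sem ((M.lab M.q0, []) : Trace I O))
    (hL : ∀ p, H.lab p = p.1)
    (hδ : ∀ s ∈ S, ∀ (i : I) (o : O) (r : CS I O → Option (O → ℝ≥0∞)),
      H.trans (stateOf E M.sem s) i (o, r) =
        if r = rowOn E M.sem (extT s i o) then probOf M.sem (traceInput s i) o else 0) :
    ∀ s : Trace I O, (s ∈ S ∨ inLt M.sem S s) → ∀ e ∈ E,
      M.sem (traceCS s e) = H.sem (traceCS s e) := by
  intro s hs e he
  obtain ⟨j0, le0⟩ := e
  -- Observability of short traces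
  have obsS : ∀ s ∈ S, ∃ q, M.dstar s = some q := by
    intro s hs
    have h := hrows s hs j0
    rw [sem_traceInput] at h
    cases hq : M.dstar s with
    | none => rw [hq] at h; exact absurd rfl h
    | some q => exact ⟨q, rfl⟩
  -- Every short trace starts with the initial output
  have labq0 : ∀ s ∈ S, s.1 = M.lab M.q0 := by
    intro s hs
    have h0 : ((s.1, []) : Trace I O) ∈ S :=
      hSpc s hs (s.1, []) ⟨rfl, List.nil_prefix⟩
    obtain ⟨q, hq⟩ := obsS _ h0
    rw [DetMDP.dstar] at hq
    by_cases h : M.lab M.q0 = s.1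
    · exact h.symm
    · rw [if_neg h] at hq; exact absurd hq (by simp)
  -- probOf equals the true output distribution for short traces
  have probOfEq : ∀ s ∈ S, ∀ (q : Q), M.dstar s = some q → ∀ (j : I),
      probOf M.sem (traceInput s j) = M.outDist q j := by
    intro s hs q hq j
    funext o
    rw [probOf, sem_traceInput, hq]
    rfl
  -- Output distributions of the hypothesis at short states
  have HOut : ∀ s ∈ S, ∀ j : I,
      H.outDist (stateOf E M.sem s) j = fun o => probOf M.sem (traceInput s j) o := by
    intro s hs j
    funext o
    have key : ∀ b : O × (CS I O → Option (O → ℝ≥0∞)),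
        b ≠ (o, rowOn E M.sem (extT s j o)) →
        (if H.lab b = o then H.trans (stateOf E M.sem s) j b else 0) = 0 := by
      intro b hb
      obtain ⟨b1, b2⟩ := b
      rw [hL]
      by_cases h1 : b1 = o
      · subst h1
        rw [if_pos rfl, hδ s hs j b1 b2, if_neg]
        intro h2
        exact hb (by rw [h2])
      · rw [if_neg h1]
    simp only [DetMDP.outDist]
    rw [tsum_eq_single _ key, hL, if_pos rfl, hδ s hs, if_pos rfl]
  -- Steps of the hypothesis at short states
  have HStep : ∀ s ∈ S, ∀ (j : I) (o : O),
      H.step (stateOf E M.sem s) j o =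
        if 0 < probOf M.sem (traceInput s j) o
        then some (stateOf E M.sem (extT s j o)) else none := by
    intro s hs j o
    have hstate : stateOf E M.sem (extT s j o) = (o, rowOn E M.sem (extT s j o)) := by
      rw [stateOf, lastOut_extT]
    by_cases hp : 0 < probOf M.sem (traceInput s j) o
    · rw [if_pos hp, DetMDP.step]
      have hex : ∃ q', 0 < H.trans (stateOf E M.sem s) j q' ∧ H.lab q' = o :=
        ⟨(o, rowOn E M.sem (extT s j o)),
          by rw [hδ s hs, if_pos rfl]; exact hp, hL _⟩
      rw [dif_pos hex]
      have hc := hex.choose_spec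
      have heta : hex.choose = ((hex.choose.1, hex.choose.2) :
          O × (CS I O → Option (O → ℝ≥0∞))) := rfl
      have h1 : hex.choose.1 = o := by rw [← hL]; exact hc.2
      have h2 : hex.choose.2 = rowOn E M.sem (extT s j hex.choose.1) := by
        by_contra hne
        have hz := hδ s hs j hex.choose.1 hex.choose.2
        rw [if_neg hne] at hz
        have := hc.1
        rw [heta, hz] at this
        exact lt_irrefl 0 this
      rw [hstate]
      congr 1
      rw [heta, Prod.ext_iff]
      exact ⟨h1, by rw [h2, h1]⟩
    · rw [if_neg hp, DetMDP.step, dif_neg]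
      rintro ⟨⟨b1, b2⟩, hb1, hb2⟩
      rw [hL] at hb2
      subst hb2
      rw [hδ s hs] at hb1
      by_cases h : b2 = rowOn E M.sem (extT s j b1)
      · rw [if_pos h] at hb1; exact hp hb1
      · rw [if_neg h] at hb1; exact lt_irrefl 0 hb1
  -- Reachability: the hypothesis state reached by a short trace is its stateOf
  have hreach : ∀ s ∈ S, H.dstar s = some (stateOf E M.sem s) := by
    intro s hs
    obtain ⟨o0, l⟩ := s
    induction l using List.reverseRecOn with
    | nil =>
      have h0 : o0 = M.lab M.q0 := labq0 _ hs
      subst h0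
      rw [DetMDP.dstar]
      rw [if_pos (by rw [hq0, hL]; rfl)]
      exact congrArg some hq0
    | append_singleton l x ih =>
      obtain ⟨j, o⟩ := x
      have hs0 : ((o0, l) : Trace I O) ∈ S :=
        hSpc _ hs (o0, l) ⟨rfl, List.prefix_append _ _⟩
      have hext : (extT (o0, l) j o : Trace I O) = (o0, l ++ [(j, o)]) := rfl
      obtain ⟨q, hq⟩ := obsS _ hs
      obtain ⟨q0', hq0'⟩ := obsS _ hs0
      have hMstep : M.step q0' j o = some q := by
        have := dstar_ext M (o0, l) j o
        rw [hext, hq, hq0'] at this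
        exact this.symm
      have hp : 0 < probOf M.sem (traceInput ((o0, l) : Trace I O) j) o := by
        rw [probOfEq _ hs0 q0' hq0']
        exact outDist_pos_of_step M q0' j o q hMstep
      rw [← hext, dstar_ext_some H _ j o _ (ih hs0), HStep _ hs0, if_pos hp, hext]
  -- Main claim: agreement on all columns starting from short traces
  have hC : ∀ (le : List (O × I)) (j : I), (j, le) ∈ E → ∀ s ∈ S,
      M.sem (traceCS s (j, le)) = H.sem (traceCS s (j, le)) := by
    intro le
    induction le with
    | nil =>
      intro j hj s hs
      show M.sem (traceInput s j ++ []) = H.sem (traceInput s j ++ [])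
      rw [List.append_nil]
      obtain ⟨q, hq⟩ := obsS s hs
      rw [sem_traceInput M, hq, sem_traceInput H, hreach s hs]
      show some (M.outDist q j) = some (H.outDist (stateOf E M.sem s) j)
      rw [HOut s hs j, probOfEq s hs q hq j]
    | cons x l2 ih =>
      intro j hj s hs
      obtain ⟨o', j'⟩ := x
      have hE' : ((j', l2) : CS I O) ∈ E :=
        hEsc j ((o', j') :: l2) hj o' j' l2 (List.suffix_refl _)
      rw [traceCS_cons]
      by_cases hp : 0 < probOf M.sem (traceInput s j) o'
      · obtain ⟨s2, hs2, hlast, hrow⟩ := hclosed (extT s j o') ⟨s, hs, j, o', rfl, hp⟩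
        have hMrow : M.sem (traceCS (extT s j o') (j', l2)) =
            M.sem (traceCS s2 (j', l2)) := by
          have := congrFun hrow ((j', l2) : CS I O)
          simp only [rowOn, if_pos hE'] at this
          exact this
        have hstate : stateOf E M.sem (extT s j o') = stateOf E M.sem s2 := by
          rw [stateOf, stateOf, hlast, hrow]
        have hHd : H.dstar (extT s j o') = some (stateOf E M.sem s2) := by
          rw [dstar_ext_some H _ _ _ _ (hreach s hs), HStep s hs, if_pos hp, hstate]
        have hHrow : H.sem (traceCS (extT s j o') (j', l2)) =
            H.sem (traceCS s2 (j', l2)) :=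
          sem_traceCS_congr H _ _ (by rw [hHd, hreach s2 hs2]) l2 j'
        rw [hMrow, hHrow]
        exact ih j' hE' s2 hs2
      · rw [not_lt, le_zero_iff] at hp
        obtain ⟨q, hq⟩ := obsS s hs
        have hz : M.outDist q j o' = 0 := by
          rw [← probOfEq s hs q hq j]; exact hp
        have hMd : M.dstar (extT s j o') = none := by
          rw [dstar_ext_some M _ _ _ _ hq]
          exact step_none M q j o' hz
        have hHd : H.dstar (extT s j o') = none := by
          rw [dstar_ext_some H _ _ _ _ (hreach s hs), HStep s hs,
            if_neg (by rw [hp]; exact lt_irrefl 0)]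
        rw [sem_traceCS_none M _ hMd, sem_traceCS_none H _ hHd]
  -- Conclude
  cases hs with
  | inl hs => exact hC le0 j0 he s hs
  | inr hs =>
    obtain ⟨s0, hs0, j1, o1, rfl, hp⟩ := hs
    obtain ⟨s2, hs2, hlast, hrow⟩ := hclosed (extT s0 j1 o1) ⟨s0, hs0, j1, o1, rfl, hp⟩
    have hMrow : M.sem (traceCS (extT s0 j1 o1) (j0, le0)) =
        M.sem (traceCS s2 (j0, le0)) := by
      have := congrFun hrow ((j0, le0) : CS I O)
      simp only [rowOn, if_pos he] at this
      exact this
    have hstate : stateOf E M.sem (extT s0 j1 o1) = stateOf E M.sem s2 := by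
      rw [stateOf, stateOf, hlast, hrow]
    have hHd : H.dstar (extT s0 j1 o1) = some (stateOf E M.sem s2) := by
      rw [dstar_ext_some H _ _ _ _ (hreach s0 hs0), HStep s0 hs0, if_pos hp, hstate]
    have hHrow : H.sem (traceCS (extT s0 j1 o1) (j0, le0)) =
        H.sem (traceCS s2 (j0, le0)) :=
      sem_traceCS_congr H _ _ (by rw [hHd, hreach s2 hs2]) le0 j0
    rw [hMrow, hHrow]
    exact hC le0 j0 he s2 hs2
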